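/- Let c₁, c₂, c₃ be real numbers with c₁ ≥ 1, c₂ ≥ 1, c₃ ≥ 1, and let ε ∈ {1,−1}. If (c₁ + 1/c₁)(c₂ + 1/c₂) − 2(c₃ + 1/c₃) = ε·(c₁ − 1/c₁)(c₂ − 1/c₂), then c₃ = c₁·c₂, or c₁ = c₂·c₃, or c₂ = c₁·c₃. -/

import Mathlib

lemma key18 (a b : ℝ) (ha : 0 < a) (hb : 0 < b) (h : a + 1/a = b + 1/b) :
    a = b ∨ a * b = 1 := by
  have h' : (a - b) * (a * b - 1) = 0 := by
    field_simp at h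
    nlinarith [h]
  rcases mul_eq_zero.mp h' with h'' | h''
  · left; linarith
  · right; linarith

/-- The key algebraic step: if `c₁, c₂, c₃ ≥ 1`, `ε ∈ {1, −1}` and
`(c₁ + 1/c₁)(c₂ + 1/c₂) − 2(c₃ + 1/c₃) = ε(c₁ − 1/c₁)(c₂ − 1/c₂)`,
then one of `c₁, c₂, c₃` is the product of the other two. -/
theorem stmt18 (c₁ c₂ c₃ ε : ℝ)
    (h₁ : 1 ≤ c₁) (h₂ : 1 ≤ c₂) (h₃ : 1 ≤ c₃)
    (hε : ε = 1 ∨ ε = -1)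
    (h : (c₁ + 1 / c₁) * (c₂ + 1 / c₂) - 2 * (c₃ + 1 / c₃) =
      ε * ((c₁ - 1 / c₁) * (c₂ - 1 / c₂))) :
    c₃ = c₁ * c₂ ∨ c₁ = c₂ * c₃ ∨ c₂ = c₁ * c₃ := by
  have p₁ : (0:ℝ) < c₁ := by linarith
  have p₂ : (0:ℝ) < c₂ := by linarith
  have p₃ : (0:ℝ) < c₃ := by linarith
  rcases hε with rfl | rfl
  · -- c₃ + 1/c₃ = c₁/c₂ + c₂/c₁
    have h' : (c₁*c₁+1)*(c₂*c₂+1)*c₃ - c₁*c₂*(2*(c₃*c₃+1)) = (c₁*c₁-1)*(c₂*c₂-1)*c₃ := by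
      have hne : (c₁*c₂) ≠ 0 := by positivity
      apply mul_right_cancel₀ hne
      field_simp at h
      linear_combination (c₁*c₂) * h
    have heq : c₃ + 1/c₃ = (c₁/c₂) + 1/(c₁/c₂) := by
      field_simp
      linear_combination -h' / 2
    rcases key18 c₃ (c₁/c₂) p₃ (by positivity) heq with hc | hc
    · right; left
      field_simp at hc
      linarith
    · right; right
      field_simp at hc
      linear_combination -hc
  · have h' : (c₁*c₁+1)*(c₂*c₂+1)*c₃ - c₁*c₂*(2*(c₃*c₃+1)) = -((c₁*c₁-1)*(c₂*c₂-1)*c₃) := by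
      have hne : (c₁*c₂) ≠ 0 := by positivity
      apply mul_right_cancel₀ hne
      field_simp at h
      linear_combination (c₁*c₂) * h
    have heq : c₃ + 1/c₃ = (c₁*c₂) + 1/(c₁*c₂) := by
      field_simp
      linear_combination -h' / 2
    rcases key18 c₃ (c₁*c₂) p₃ (by positivity) heq with hc | hc
    · left; exact hc
    · -- c₃ * (c₁ * c₂) = 1 with all ≥ 1 forces all = 1
      left
      nlinarith [mul_le_mul h₁ h₂ (by norm_num) (by linarith : (0:ℝ) ≤ c₁)]
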